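/- For every m ∈ {0, 1, ..., b_n}, the total degree of the polynomial q_{n,m} equals m. In particular, among q_{n,0}, ..., q_{n,b_n} there is exactly one polynomial of total degree one, i.e. the D-invariant space Q = span{q_{n,m} : m = 0, ..., b_n} has breadth one. -/

import Mathlib

/-- The polynomial `q_{n,m}` from Theorem 2.2 (Li–Zhang):
`q_{n,m} = ∑_{τ(γ₁,…,γ_d)=m} (∏_{i,j} c_{i,j}^{γ_{i,j}}/γ_{i,j}!) · x₁^{|γ₁|} ⋯ x_d^{|γ_d|}`,
where `τ(γ₁,…,γ_d) = ∑_j b_j ∑_i γ_{i,j}`.  Since every `b_j ≥ 1`, every solution of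
`τ(γ) = m` satisfies `γ_{i,j} ≤ m`, so the sum below ranges over all solutions. -/
noncomputable def qPoly (d n : ℕ) (b : Fin n → ℕ) (c : Fin d → Fin n → ℝ) (m : ℕ) :
    MvPolynomial (Fin d) ℝ :=
  ∑ γ ∈ (Finset.Icc (0 : Fin d → Fin n → ℕ) fun _ _ => m).filter
      (fun γ => ∑ j, b j * ∑ i, γ i j = m),
    MvPolynomial.C (∏ i, ∏ j, c i j ^ γ i j / ((γ i j).factorial : ℝ)) *
      ∏ i, MvPolynomial.X i ^ (∑ j, γ i j)

open MvPolynomial in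
lemma aux_prod_X_pow {d : ℕ} (e : Fin d → ℕ) :
    ∏ i, (X i : MvPolynomial (Fin d) ℝ) ^ e i
      = monomial (Finsupp.equivFunOnFinite.symm e) 1 := by
  have h : (Finsupp.equivFunOnFinite.symm e : Fin d →₀ ℕ)
      = ∑ i, Finsupp.single i (e i) := by
    ext j
    simp [Finsupp.finset_sum_apply, Finsupp.single_apply]
  rw [h, monomial_sum_one]
  simp [X_pow_eq_monomial]

/-- For every `m ∈ {0,…,b_n}`, the total degree of `q_{n,m}` equals `m`;
in particular among `q_{n,0},…,q_{n,b_n}` there is exactly one polynomial of total degree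
one, i.e. the `D`-invariant space `Q` has breadth one. -/
theorem qPoly_totalDegree_eq_and_breadth_one
    (d n : ℕ) (hd : 1 ≤ d) (hn : 1 ≤ n)
    (b : Fin n → ℕ) (c : Fin d → Fin n → ℝ)
    (hb1 : b ⟨0, hn⟩ = 1)
    (hb2 : ∀ j : Fin n, 1 ≤ j.val → 2 ≤ b j)
    (hbmono : ∀ j j' : Fin n, 1 ≤ j.val → j.val < j'.val → b j < b j')
    (hc : ∃ i : Fin d, c i ⟨0, hn⟩ ≠ 0) :
    (∀ m : ℕ, m ≤ b ⟨n - 1, by omega⟩ →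
      (qPoly d n b c m).totalDegree = m) ∧
    (∃! m : ℕ, m ≤ b ⟨n - 1, by omega⟩ ∧ (qPoly d n b c m).totalDegree = 1) := by

  classical
  obtain ⟨i0, hi0⟩ := hc
  set j0 : Fin n := ⟨0, hn⟩ with hj0
  have hb : ∀ j, 1 ≤ b j := by
    intro j
    rcases Nat.eq_zero_or_pos j.val with h | h
    · have : j = j0 := Fin.ext h
      rw [this, hj0, hb1]
    · exact le_trans (by norm_num) (hb2 j h)
  have key : ∀ m : ℕ, (qPoly d n b c m).totalDegree = m := by
    intro m
    apply le_antisymm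
    · -- upper bound
      refine (MvPolynomial.totalDegree_finset_sum _ _).trans ?_
      apply Finset.sup_le
      intro γ hγ
      simp only [Finset.mem_filter, Finset.mem_Icc] at hγ
      obtain ⟨-, hτ⟩ := hγ
      calc (MvPolynomial.C (∏ i, ∏ j, c i j ^ γ i j / ((γ i j).factorial : ℝ)) *
              ∏ i, MvPolynomial.X i ^ (∑ j, γ i j)).totalDegree
          ≤ (MvPolynomial.C (∏ i, ∏ j, c i j ^ γ i j / ((γ i j).factorial : ℝ)) :
              MvPolynomial (Fin d) ℝ).totalDegree
            + (∏ i, (MvPolynomial.X i : MvPolynomial (Fin d) ℝ) ^ (∑ j, γ i j)).totalDegree :=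
            MvPolynomial.totalDegree_mul _ _
        _ ≤ 0 + ∑ i, ((MvPolynomial.X i : MvPolynomial (Fin d) ℝ) ^ (∑ j, γ i j)).totalDegree := by
            gcongr
            · exact le_of_eq (MvPolynomial.totalDegree_C _)
            · exact MvPolynomial.totalDegree_finset_prod _ _
        _ = ∑ i, ∑ j, γ i j := by
            simp [MvPolynomial.totalDegree_X_pow]
        _ = ∑ j, ∑ i, γ i j := Finset.sum_comm
        _ ≤ ∑ j, b j * ∑ i, γ i j := by
            gcongr with j
            exact Nat.le_mul_of_pos_left _ (hb j)
        _ = m := hτ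
    · -- lower bound: coefficient of X_{i0}^m is nonzero
      set γ0 : Fin d → Fin n → ℕ := fun i j => if i = i0 ∧ j = j0 then m else 0 with hγ0
      have hcoeff : (qPoly d n b c m).coeff (Finsupp.single i0 m)
          = c i0 j0 ^ m / (m.factorial : ℝ) := by
        rw [qPoly, MvPolynomial.coeff_sum]
        rw [Finset.sum_eq_single γ0]
        · rw [aux_prod_X_pow, MvPolynomial.coeff_C_mul, MvPolynomial.coeff_monomial]
          rw [if_pos]
          · rw [mul_one]
            rw [Finset.prod_eq_single i0, Finset.prod_eq_single j0]
            · simp [hγ0]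
            · intro j _ hj
              simp [hγ0, hj]
            · simp
            · intro i _ hi
              apply Finset.prod_eq_one
              intro j _
              simp [hγ0, hi]
            · simp
          · apply Finsupp.ext
            intro i
            simp only [Finsupp.coe_equivFunOnFinite_symm, Finsupp.single_apply]
            by_cases hi : i = i0
            · subst hi
              simp [hγ0, Finset.sum_ite_eq']
            · simp [hγ0, hi, Ne.symm hi]
        · intro γ hγ hne
          rw [aux_prod_X_pow, MvPolynomial.coeff_C_mul, MvPolynomial.coeff_monomial,
            if_neg, mul_zero]
          intro heq
          apply hne
          simp only [Finset.mem_filter, Finset.mem_Icc] at hγ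
          obtain ⟨-, hτ⟩ := hγ
          -- from heq: row sums are single i0 m
          have hrow : ∀ i, ∑ j, γ i j = if i = i0 then m else 0 := by
            intro i
            have := congrArg (fun f => f i) heq
            simpa [Finsupp.single_apply, eq_comm] using this
          have hzero : ∀ i, i ≠ i0 → ∀ j, γ i j = 0 := by
            intro i hi j
            have h1 := hrow i
            rw [if_neg hi] at h1
            exact Finset.sum_eq_zero_iff.mp h1 j (Finset.mem_univ j)
          have hcol : ∀ j, ∑ i, γ i j = γ i0 j := by
            intro j
            rw [Finset.sum_eq_single i0]
            · intro i _ hi; exact hzero i hi j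
            · simp
          have hs1 : ∑ j, b j * γ i0 j = m := by
            rw [← hτ]; exact Finset.sum_congr rfl fun j _ => by rw [hcol]
          have hs2 : ∑ j, γ i0 j = m := by
            have := hrow i0; simpa using this
          have hjz : ∀ j, j ≠ j0 → γ i0 j = 0 := by
            intro j hj
            by_contra hne2
            have h2 : 2 ≤ b j := by
              apply hb2
              rcases Nat.eq_zero_or_pos j.val with h | h
              · exact absurd (Fin.ext h) hj
              · exact h
            have : ∑ j, γ i0 j < ∑ j, b j * γ i0 j := by
              apply Finset.sum_lt_sum
              · intro j' _
                exact Nat.le_mul_of_pos_left _ (hb j')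
              · exact ⟨j, Finset.mem_univ j, by
                  have : 1 ≤ γ i0 j := Nat.one_le_iff_ne_zero.mpr hne2
                  calc γ i0 j = 1 * γ i0 j := (one_mul _).symm
                    _ < 2 * γ i0 j := by
                        apply Nat.mul_lt_mul_of_lt_of_le (by norm_num) le_rfl
                        omega
                    _ ≤ b j * γ i0 j := Nat.mul_le_mul_right _ h2⟩
            omega
          have hj0v : γ i0 j0 = m := by
            rw [← hs2, Finset.sum_eq_single j0]
            · intro j _ hj; exact hjz j hj
            · simp
          funext i j
          by_cases hi : i = i0
          · subst hi
            by_cases hj : j = j0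
            · subst hj; simp [hγ0, hj0v]
            · simp [hγ0, hj, hjz j hj]
          · simp [hγ0, hi, hzero i hi j]
        · intro habs
          exfalso
          apply habs
          simp only [Finset.mem_filter, Finset.mem_Icc]
          refine ⟨⟨by intro i j; simp [hγ0], by intro i j; simp only [hγ0]; split <;> omega⟩, ?_⟩
          have : ∀ j, ∑ i, γ0 i j = if j = j0 then m else 0 := by
            intro j
            simp only [hγ0]
            by_cases hj : j = j0 <;> simp [hj, Finset.sum_ite_eq']
          rw [Finset.sum_congr rfl fun j _ => by rw [this j]]
          simp [hb1, hj0]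
          rw [← hj0, hb1, one_mul]
      have hne : (qPoly d n b c m).coeff (Finsupp.single i0 m) ≠ 0 := by
        rw [hcoeff]
        exact div_ne_zero (pow_ne_zero _ hi0) (by positivity)
      have h := MvPolynomial.le_totalDegree (p := qPoly d n b c m)
        (s := Finsupp.single i0 m) (by simpa using hne)
      simpa [Finsupp.sum_single_index] using h
  have hbn : 1 ≤ b ⟨n - 1, by omega⟩ := hb _
  refine ⟨fun m _ => key m, ⟨1, ⟨hbn, key 1⟩, ?_⟩⟩
  intro m' hm'
  rw [key m'] at hm'
  exact hm'.2
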